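/- Let V be a 𝔤-module with action ρ, where 𝔤 = 𝔰𝔳(0). Then for every m ∈ ℤ, every polynomial u ∈ ℂ[x,y,z] and every w ∈ V: ρ(L_m)( u(ρ(L₀),ρ(M₀),ρ(Y₀))·w ) = u(ρ(L₀)−m·id, ρ(M₀), ρ(Y₀))·( ρ(L_m)·w ) − (m/2)·(∂u/∂z)(ρ(L₀)−m·id, ρ(M₀), ρ(Y₀))·( ρ(Y_m)·w ) + (m²/4)·(∂²u/∂z²)(ρ(L₀)−m·id, ρ(M₀), ρ(Y₀))·( ρ(M_m)·w ). Here u(A,B,C) denotes the operator obtained by substituting the pairwise commuting operators A, B, C for x, y, z in u, and ∂u/∂z, ∂²u/∂z² are formal partial derivatives. -/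

import Mathlib

/-- Evaluation of a polynomial `u(x,y,z)` at three operators `A, B, C`, applied to a
vector `w`: `u(A,B,C)·w` (when `A,B,C` pairwise commute, this is the usual substitution). -/
noncomputable def evalP {V : Type*} [AddCommGroup V] [Module ℂ V]
    (A B C : Module.End ℂ V) (w : V) (u : MvPolynomial (Fin 3) ℂ) : V :=
  (AddMonoidAlgebra.coeff u).sum fun d c => c • ((A ^ d 0 * B ^ d 1 * C ^ d 2) w)

open MvPolynomial

lemma evalP_add {V : Type*} [AddCommGroup V] [Module ℂ V]
    (A B C : Module.End ℂ V) (w : V) (u v : MvPolynomial (Fin 3) ℂ) :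
    evalP A B C w (u + v) = evalP A B C w u + evalP A B C w v := by
  unfold evalP
  rw [AddMonoidAlgebra.coeff_add]
  apply Finsupp.sum_add_index' <;> intro d <;> simp [add_smul]

lemma evalP_monomial {V : Type*} [AddCommGroup V] [Module ℂ V]
    (A B C : Module.End ℂ V) (w : V) (d : Fin 3 →₀ ℕ) (c : ℂ) :
    evalP A B C w (monomial d c) = c • ((A ^ d 0 * B ^ d 1 * C ^ d 2) w) := by
  unfold evalP
  apply MvPolynomial.sum_monomial_eq
  simp

lemma commpow {R : Type*} [Ring R] (T A A' : R) (h : T * A = A' * T) :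
    ∀ a : ℕ, T * A ^ a = A' ^ a * T := by
  intro a
  induction a with
  | zero => simp
  | succ a ih => rw [pow_succ, ← mul_assoc, ih, mul_assoc, h, ← mul_assoc, ← pow_succ]

lemma keyC {R : Type*} [Ring R] [Module ℂ R] [SMulCommClass ℂ R R] [IsScalarTower ℂ R R]
    (T C Ym Mm : R) (m : ℂ)
    (hT : T * C = C * T - (m / 2) • Ym)
    (hY : Ym * C = C * Ym - m • Mm)
    (hM : Mm * C = C * Mm) :
    ∀ k : ℕ, T * C ^ k = C ^ k * T - (m / 2 * k) • (C ^ (k - 1) * Ym)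
      + (m ^ 2 / 4 * ((k * (k - 1) : ℕ) : ℂ)) • (C ^ (k - 2) * Mm) := by
  have hp : ∀ (n : ℕ) (X : R), C ^ n * (C * X) = C ^ (n + 1) * X := by
    intro n X; rw [← mul_assoc, ← pow_succ]
  intro k
  induction k with
  | zero => simp
  | succ k ih =>
    rw [pow_succ, ← mul_assoc, ih]
    rcases k with _ | k
    · simp [hT]
    rcases k with _ | k
    · simp only [add_mul, sub_mul, smul_mul_assoc, mul_assoc, hT, hY, hM]
      simp only [pow_one, pow_zero, one_mul, mul_sub, mul_smul_comm, hp]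
      push_cast
      match_scalars <;> ring
    · simp only [add_mul, sub_mul, smul_mul_assoc, mul_assoc, hT, hY, hM]
      simp only [mul_sub, mul_smul_comm, hp]
      simp only [Nat.add_sub_cancel, Nat.succ_sub_one, show k+1+1 = k+2 from rfl,
        show k+1+1+1 = k+3 from rfl, show k+2+1 = k+3 from rfl]
      push_cast
      match_scalars <;> ring

lemma main_aux {V : Type*} [AddCommGroup V] [Module ℂ V]
    (T A0 B0 C0 Ym Mm : Module.End ℂ V) (m : ℂ)
    (f1 : T * A0 = (A0 - m • 1) * T)
    (f2 : T * B0 = B0 * T)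
    (f3 : T * C0 = C0 * T - (m / 2) • Ym)
    (f4 : Ym * C0 = C0 * Ym - m • Mm)
    (f5 : Mm * C0 = C0 * Mm)
    (u : MvPolynomial (Fin 3) ℂ) (w : V) :
    T (evalP A0 B0 C0 w u) =
      evalP (A0 - m • 1) B0 C0 (T w) u
      - (m / 2) • evalP (A0 - m • 1) B0 C0 (Ym w) (pderiv (2 : Fin 3) u)
      + (m ^ 2 / 4) • evalP (A0 - m • 1) B0 C0 (Mm w)
          (pderiv (2 : Fin 3) (pderiv (2 : Fin 3) u)) := by
  induction u using MvPolynomial.induction_on' with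
  | add p q hp hq =>
    simp only [evalP_add, map_add, hp, hq]
    module
  | monomial d c =>
    set A' : Module.End ℂ V := A0 - m • 1 with hA'
    have key : T * (A0 ^ d 0 * B0 ^ d 1 * C0 ^ d 2) =
        (A' ^ d 0 * B0 ^ d 1 * C0 ^ d 2) * T
        - (m / 2 * (d 2)) • ((A' ^ d 0 * B0 ^ d 1 * C0 ^ (d 2 - 1)) * Ym)
        + (m ^ 2 / 4 * ((d 2 * (d 2 - 1) : ℕ) : ℂ)) •
            ((A' ^ d 0 * B0 ^ d 1 * C0 ^ (d 2 - 2)) * Mm) := by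
      calc T * (A0 ^ d 0 * B0 ^ d 1 * C0 ^ d 2)
          = ((T * A0 ^ d 0) * B0 ^ d 1) * C0 ^ d 2 := by
            rw [← mul_assoc, ← mul_assoc]
        _ = A' ^ d 0 * (B0 ^ d 1 * (T * C0 ^ d 2)) := by
            rw [commpow T A0 A' f1, mul_assoc, mul_assoc, ← mul_assoc T,
              commpow T B0 B0 f2, mul_assoc]
        _ = _ := by
            rw [keyC T C0 Ym Mm m f3 f4 f5]
            simp only [mul_sub, mul_add, mul_smul_comm, ← mul_assoc]
    have keyw := congrArg (fun E : Module.End ℂ V => E w) key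
    simp only [Module.End.mul_apply, LinearMap.sub_apply, LinearMap.add_apply,
      LinearMap.smul_apply] at keyw
    simp only [pderiv_monomial, evalP_monomial, Finsupp.tsub_apply,
      Finsupp.single_apply, Nat.sub_sub,
      show (if (2:Fin 3) = 0 then 1 else 0) = 0 from rfl,
      show (if (2:Fin 3) = 1 then 1 else 0) = 0 from rfl,
      Nat.sub_zero, Nat.add_zero, Module.End.mul_apply, LinearMap.smul_apply, map_smul]
    norm_num
    rw [keyw]
    match_scalars <;> push_cast <;> ring


/-- For any `𝔰𝔳(0)`-module `V`, any `m ∈ ℤ`, `u ∈ ℂ[x,y,z]` and `w ∈ V`: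
`ρ(L_m)(u(ρL₀,ρM₀,ρY₀)·w) = u(ρL₀ − m·id, ρM₀, ρY₀)·(ρ(L_m)·w)
  − (m/2)·(∂u/∂z)(ρL₀ − m·id, ρM₀, ρY₀)·(ρ(Y_m)·w)
  + (m²/4)·(∂²u/∂z²)(ρL₀ − m·id, ρM₀, ρY₀)·(ρ(M_m)·w)`. -/
theorem stmt12
    -- `𝔤 = 𝔰𝔳(0)`: a complex Lie algebra with basis `{L n, M n, Y n : n ∈ ℤ}` ...
    (g : Type*) [LieRing g] [LieAlgebra ℂ g] (L M Y : ℤ → g)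
    (B : Module.Basis (Fin 3 × ℤ) ℂ g)
    (hB : ∀ n : ℤ, B (0, n) = L n ∧ B (1, n) = M n ∧ B (2, n) = Y n)
    -- ... and the following brackets:
    (hLL : ∀ n m : ℤ, ⁅L n, L m⁆ = (((m : ℂ) - (n : ℂ))) • L (m + n))
    (hLY : ∀ n m : ℤ, ⁅L n, Y m⁆ = ((m : ℂ) - (n : ℂ) / 2) • Y (m + n))
    (hLM : ∀ n m : ℤ, ⁅L n, M m⁆ = (m : ℂ) • M (m + n))
    (hYY : ∀ n m : ℤ, ⁅Y n, Y m⁆ = (((m : ℂ) - (n : ℂ))) • M (m + n))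
    (hYM : ∀ n m : ℤ, ⁅Y n, M m⁆ = 0)
    (hMM : ∀ n m : ℤ, ⁅M n, M m⁆ = 0)
    -- a `𝔤`-module `V`:
    (V : Type*) [AddCommGroup V] [Module ℂ V] [LieRingModule g V] [LieModule ℂ g V]
    (m : ℤ) (u : MvPolynomial (Fin 3) ℂ) (w : V) :
    ⁅L m, evalP (LieModule.toEnd ℂ g V (L 0)) (LieModule.toEnd ℂ g V (M 0))
        (LieModule.toEnd ℂ g V (Y 0)) w u⁆ =
      evalP (LieModule.toEnd ℂ g V (L 0) - (m : ℂ) • 1) (LieModule.toEnd ℂ g V (M 0))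
        (LieModule.toEnd ℂ g V (Y 0)) ⁅L m, w⁆ u
      - ((m : ℂ) / 2) • evalP (LieModule.toEnd ℂ g V (L 0) - (m : ℂ) • 1)
          (LieModule.toEnd ℂ g V (M 0)) (LieModule.toEnd ℂ g V (Y 0)) ⁅Y m, w⁆
          (MvPolynomial.pderiv (2 : Fin 3) u)
      + ((m : ℂ) ^ 2 / 4) • evalP (LieModule.toEnd ℂ g V (L 0) - (m : ℂ) • 1)
          (LieModule.toEnd ℂ g V (M 0)) (LieModule.toEnd ℂ g V (Y 0)) ⁅M m, w⁆
          (MvPolynomial.pderiv (2 : Fin 3) (MvPolynomial.pderiv (2 : Fin 3) u)) := by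
  have ρ := LieModule.toEnd ℂ g V
  have lie_eq : ∀ x y : g, LieModule.toEnd ℂ g V x * LieModule.toEnd ℂ g V y =
      LieModule.toEnd ℂ g V y * LieModule.toEnd ℂ g V x + LieModule.toEnd ℂ g V ⁅x, y⁆ := by
    intro x y
    ext v
    simp only [Module.End.mul_apply, LinearMap.add_apply, LieModule.toEnd_apply_apply]
    rw [leibniz_lie]
    abel
  have f1 : LieModule.toEnd ℂ g V (L m) * LieModule.toEnd ℂ g V (L 0) =
      (LieModule.toEnd ℂ g V (L 0) - (m : ℂ) • 1) * LieModule.toEnd ℂ g V (L m) := by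
    rw [lie_eq, hLL]
    simp only [zero_add, map_smul, sub_mul, smul_mul_assoc, one_mul]
    module
  have f2 : LieModule.toEnd ℂ g V (L m) * LieModule.toEnd ℂ g V (M 0) =
      LieModule.toEnd ℂ g V (M 0) * LieModule.toEnd ℂ g V (L m) := by
    rw [lie_eq, hLM]
    simp
  have f3 : LieModule.toEnd ℂ g V (L m) * LieModule.toEnd ℂ g V (Y 0) =
      LieModule.toEnd ℂ g V (Y 0) * LieModule.toEnd ℂ g V (L m)
      - ((m : ℂ) / 2) • LieModule.toEnd ℂ g V (Y m) := by
    rw [lie_eq, hLY]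
    simp only [zero_add, map_smul]
    module
  have f4 : LieModule.toEnd ℂ g V (Y m) * LieModule.toEnd ℂ g V (Y 0) =
      LieModule.toEnd ℂ g V (Y 0) * LieModule.toEnd ℂ g V (Y m)
      - (m : ℂ) • LieModule.toEnd ℂ g V (M m) := by
    rw [lie_eq, hYY]
    simp only [zero_add, map_smul]
    module
  have f5 : LieModule.toEnd ℂ g V (M m) * LieModule.toEnd ℂ g V (Y 0) =
      LieModule.toEnd ℂ g V (Y 0) * LieModule.toEnd ℂ g V (M m) := by
    have h0 : ⁅M m, Y 0⁆ = 0 := by rw [← lie_skew, hYM, neg_zero]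
    rw [lie_eq, h0]
    simp
  have main := main_aux (LieModule.toEnd ℂ g V (L m)) (LieModule.toEnd ℂ g V (L 0))
    (LieModule.toEnd ℂ g V (M 0)) (LieModule.toEnd ℂ g V (Y 0))
    (LieModule.toEnd ℂ g V (Y m)) (LieModule.toEnd ℂ g V (M m)) (m : ℂ)
    f1 f2 f3 f4 f5 u w
  simpa only [LieModule.toEnd_apply_apply] using main
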